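/- Define a map g from ℂℙ¹ × ℂℙ¹ to the set of 2-dimensional subspaces of V by: g([a:b],[c:d]) = span{(bX−aY)³, (dX−cY)²(bX−aY)} when [a:b] ≠ [c:d], and g([a:b],[a:b]) = {p ∈ V : (bX−aY)² divides p} ∪ {0}. Then g is well defined, every value of g is a Lagrangian of V containing a perfect cube, g is injective, and the image of g is exactly the set K_ℂ of all Lagrangians of V that contain a perfect cube. -/

import Mathlib

noncomputable section

open MvPolynomial

/-- The polynomial ring `ℂ[X,Y]`. -/
abbrev P2 : Type := MvPolynomial (Fin 2) ℂ

/-- The variable `X`. -/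
def Xv : P2 := X 0

/-- The variable `Y`. -/
def Yv : P2 := X 1

/-- `V`: the space of homogeneous cubic polynomials in `X, Y`. -/
def Vcubic : Submodule ℂ P2 := homogeneousSubmodule (Fin 2) ℂ 3

/-- The coefficient of `X^i Y^j`. -/
def cf (i j : ℕ) (p : P2) : ℂ := coeff (Finsupp.single 0 i + Finsupp.single 1 j) p

/-- The alternating bilinear form `ω` with `ω(X³,Y³) = 1`, `ω(X²Y,XY²) = -1/3`,
all other pairings of distinct basis vectors being `0`. -/
def omegaForm (p q : P2) : ℂ :=
  cf 3 0 p * cf 0 3 q - cf 0 3 p * cf 3 0 q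
    - (1 / 3) * (cf 2 1 p * cf 1 2 q - cf 1 2 p * cf 2 1 q)

/-- The linear form `b X - a Y` associated to the point `[a : b] ∈ ℂℙ¹`. -/
def lf (a b : ℂ) : P2 := C b * Xv - C a * Yv

/-- A Lagrangian of `V`: a 2-dimensional subspace contained in `V` on which `ω` vanishes. -/
def IsLagrangian (W : Submodule ℂ P2) : Prop :=
  W ≤ Vcubic ∧ Module.finrank ℂ W = 2 ∧ ∀ p ∈ W, ∀ q ∈ W, omegaForm p q = 0

/-- A perfect cube: a nonzero element of the form `c • (bX - aY)³`. -/
def IsPerfectCube (p : P2) : Prop :=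
  ∃ c a b : ℂ, c ≠ 0 ∧ (a ≠ 0 ∨ b ≠ 0) ∧ p = C c * lf a b ^ 3

/-- The action of `SL(2,ℂ)` on `ℂ[X,Y]` by linear substitution of the variables. -/
def subst (g : Matrix.SpecialLinearGroup (Fin 2) ℂ) : P2 →ₐ[ℂ] P2 :=
  aeval (fun i => C (g.1 i 0) * Xv + C (g.1 i 1) * Yv)

/-- The induced action of `SL(2,ℂ)` on subspaces of `ℂ[X,Y]`. -/
def mapAct (g : Matrix.SpecialLinearGroup (Fin 2) ℂ) (W : Submodule ℂ P2) :
    Submodule ℂ P2 :=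
  W.map (subst g).toLinearMap

/-- The `SL(2,ℂ)`-orbit of a subspace. -/
def slOrbit (W₀ : Submodule ℂ P2) : Set (Submodule ℂ P2) := {W | ∃ g, W = mapAct g W₀}

/-- The subspace of polynomials divisible by a fixed polynomial `q`. -/
def divisibleSub (q : P2) : Submodule ℂ P2 :=
  Submodule.restrictScalars ℂ (Ideal.span {q})

/-- The map `g` of Statement 3: for `[a:b] ≠ [c:d]` it is
`span{(bX-aY)³, (dX-cY)²(bX-aY)}`; on the diagonal it is
`{p ∈ V : (bX-aY)² ∣ p} ∪ {0}` (which, as a subspace, is `V ⊓ ((bX-aY)²)`). -/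
def gmap (a b c d : ℂ) : Submodule ℂ P2 :=
  if a * d - b * c = 0 then Vcubic ⊓ divisibleSub (lf a b ^ 2)
  else Submodule.span ℂ {lf a b ^ 3, lf c d ^ 2 * lf a b}


def S (i j : ℕ) : Fin 2 →₀ ℕ := Finsupp.single 0 i + Finsupp.single 1 j

lemma S_apply0 (i j : ℕ) : S i j 0 = i := by simp [S, Finsupp.single_apply]
lemma S_apply1 (i j : ℕ) : S i j 1 = j := by simp [S, Finsupp.single_apply]
lemma finsupp_eq (d : Fin 2 →₀ ℕ) : d = S (d 0) (d 1) := by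
  ext i; fin_cases i <;> simp [S, Finsupp.single_apply]
lemma S_inj {i j k l : ℕ} : S i j = S k l ↔ i = k ∧ j = l := by
  constructor
  · intro h
    exact ⟨by rw [← S_apply0 i j, h, S_apply0], by rw [← S_apply1 i j, h, S_apply1]⟩
  · rintro ⟨rfl, rfl⟩; rfl
lemma degree_eq (d : Fin 2 →₀ ℕ) : d.degree = d 0 + d 1 := by
  show d.support.sum d = d 0 + d 1
  rw [show d.support.sum d = ∑ k : Fin 2, d k from
    Finset.sum_subset (Finset.subset_univ _) (by intro x _ hx; simpa using hx)]
  rw [Fin.sum_univ_two]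

lemma degree_S (i j : ℕ) : (S i j).degree = i + j := by
  show (S i j).support.sum (S i j) = i + j
  rw [show (S i j).support.sum (S i j) = ∑ k : Fin 2, S i j k from
    Finset.sum_subset (Finset.subset_univ _) (by intro x _ hx; simpa using hx)]
  rw [Fin.sum_univ_two, S_apply0, S_apply1]

lemma cf_def (i j : ℕ) (p : P2) : cf i j p = coeff (S i j) p := rfl

lemma mono_eq (i j : ℕ) : Xv ^ i * Yv ^ j = monomial (S i j) (1:ℂ) := by
  rw [Xv, Yv, X_pow_eq_monomial, X_pow_eq_monomial, monomial_mul, one_mul, S]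

lemma cf_mono (i j k l : ℕ) : cf i j (Xv ^ k * Yv ^ l) = if k = i ∧ l = j then 1 else 0 := by
  rw [cf_def, mono_eq, coeff_monomial]
  by_cases h : k = i ∧ l = j
  · rw [if_pos (S_inj.mpr h), if_pos h]
  · rw [if_neg (fun hs => h (S_inj.mp hs)), if_neg h]

lemma cf_add (i j : ℕ) (p q : P2) : cf i j (p + q) = cf i j p + cf i j q := by
  simp [cf_def, coeff_add]
lemma cf_C_mul (i j : ℕ) (c : ℂ) (p : P2) : cf i j (C c * p) = c * cf i j p := by
  simp [cf_def, coeff_C_mul]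
lemma cf_smul (i j : ℕ) (c : ℂ) (p : P2) : cf i j (c • p) = c * cf i j p := by
  simp [cf_def, coeff_smul]
lemma cf_zero (i j : ℕ) : cf i j (0 : P2) = 0 := by simp [cf_def]

-- key representation lemma
lemma cubic_repr {p : P2} (hp : p ∈ Vcubic) :
    p = C (cf 3 0 p) * (Xv^3) + C (cf 2 1 p) * (Xv^2*Yv^1)
      + C (cf 1 2 p) * (Xv^1*Yv^2) + C (cf 0 3 p) * (Yv^3) := by
  have hh : p.IsHomogeneous 3 := (mem_homogeneousSubmodule _ _).mp hp
  apply MvPolynomial.ext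
  intro d
  rw [show (Yv^3 : P2) = Xv^0*Yv^3 by ring, show (Xv^3:P2) = Xv^3*Yv^0 by ring]
  simp only [coeff_add, coeff_C_mul, mono_eq, coeff_monomial]
  by_cases hd : d 0 + d 1 = 3
  · have hdS : d = S (d 0) (d 1) := finsupp_eq d
    have h4 : d = S 3 0 ∨ d = S 2 1 ∨ d = S 1 2 ∨ d = S 0 3 := by
      have h0 : d 0 ≤ 3 := by omega
      interval_cases h : d 0
      · exact Or.inr (Or.inr (Or.inr (by rw [hdS, show d 1 = 3 by omega])))
      · exact Or.inr (Or.inr (Or.inl (by rw [hdS, show d 1 = 2 by omega])))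
      · exact Or.inr (Or.inl (by rw [hdS, show d 1 = 1 by omega]))
      · exact Or.inl (by rw [hdS, show d 1 = 0 by omega])
    have hne : ∀ i j k l : ℕ, ¬(i = k ∧ j = l) → (if S i j = S k l then (1:ℂ) else 0) = 0 :=
      fun i j k l h => if_neg (fun hs => h (S_inj.mp hs))
    rcases h4 with rfl | rfl | rfl | rfl <;>
      simp only [if_pos rfl, cf_def] <;>
      · rw [hne _ _ _ _ (by omega), hne _ _ _ _ (by omega), hne _ _ _ _ (by omega)]
        simp
  · have h0 : coeff d p = 0 := hh.coeff_eq_zero (by rw [degree_eq]; exact hd)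
    have hne : ∀ i j : ℕ, i + j = 3 → (if S i j = d then (1:ℂ) else 0) = 0 := by
      intro i j hij
      refine if_neg (fun hs => hd ?_)
      rw [← hs, S_apply0, S_apply1, hij]
    rw [h0, hne 3 0 rfl, hne 2 1 rfl, hne 1 2 rfl, hne 0 3 rfl]
    ring

lemma degree_eq' : True := trivial

lemma lin_repr {p : P2} (hp : p ∈ homogeneousSubmodule (Fin 2) ℂ 1) :
    p = C (cf 1 0 p) * Xv + C (cf 0 1 p) * Yv := by
  have hh : p.IsHomogeneous 1 := (mem_homogeneousSubmodule _ _).mp hp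
  apply MvPolynomial.ext
  intro d
  have hX : (Xv : P2) = monomial (S 1 0) 1 := by
    have := mono_eq 1 0; simpa using this
  have hY : (Yv : P2) = monomial (S 0 1) 1 := by
    have := mono_eq 0 1; simpa using this
  rw [hX, hY]
  simp only [coeff_add, coeff_C_mul, coeff_monomial]
  by_cases hd : d 0 + d 1 = 1
  · have hdS : d = S (d 0) (d 1) := finsupp_eq d
    have h4 : d = S 1 0 ∨ d = S 0 1 := by
      have h0 : d 0 ≤ 1 := by omega
      interval_cases h : d 0
      · exact Or.inr (by rw [hdS, show d 1 = 1 by omega])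
      · exact Or.inl (by rw [hdS, show d 1 = 0 by omega])
    have hne : ∀ i j k l : ℕ, ¬(i = k ∧ j = l) → (if S i j = S k l then (1:ℂ) else 0) = 0 :=
      fun i j k l h => if_neg (fun hs => h (S_inj.mp hs))
    rcases h4 with rfl | rfl <;>
      simp only [if_pos rfl, cf_def] <;>
      · rw [hne _ _ _ _ (by omega)]
        simp
  · have h0 : coeff d p = 0 := hh.coeff_eq_zero (by rw [degree_eq]; exact hd)
    have hne : ∀ i j : ℕ, i + j = 1 → (if S i j = d then (1:ℂ) else 0) = 0 := by
      intro i j hij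
      refine if_neg (fun hs => hd ?_)
      rw [← hs, S_apply0, S_apply1, hij]
    rw [h0, hne 1 0 rfl, hne 0 1 rfl]
    ring

-- two polys in Vcubic with the same cf's are equal
lemma cubic_ext {p q : P2} (hp : p ∈ Vcubic) (hq : q ∈ Vcubic)
    (h30 : cf 3 0 p = cf 3 0 q) (h21 : cf 2 1 p = cf 2 1 q)
    (h12 : cf 1 2 p = cf 1 2 q) (h03 : cf 0 3 p = cf 0 3 q) : p = q := by
  rw [cubic_repr hp, cubic_repr hq, h30, h21, h12, h03]

-- evaluation
lemma eval_Xv (x y : ℂ) : eval ![x,y] Xv = x := by simp [Xv]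
lemma eval_Yv (x y : ℂ) : eval ![x,y] Yv = y := by simp [Yv]
lemma eval_lf (a b x y : ℂ) : eval ![x,y] (lf a b) = b*x - a*y := by
  simp [lf, Xv, Yv]

lemma lf_ne_zero {a b : ℂ} (h : a ≠ 0 ∨ b ≠ 0) : lf a b ≠ 0 := by
  intro h0
  have h1 : b = 0 := by have := congrArg (eval ![1,0]) h0; simpa [eval_lf] using this
  have h2 : a = 0 := by
    have := congrArg (eval ![0,1]) h0; simp [eval_lf] at this
    simpa [h1] using this
  tauto

lemma lf_exists_eval_ne {a b : ℂ} (h : a ≠ 0 ∨ b ≠ 0) :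
    ∃ x y : ℂ, eval ![x,y] (lf a b) ≠ 0 := by
  rcases h with h | h
  · exact ⟨0, 1, by simpa [eval_lf] using neg_ne_zero.mpr h⟩
  · exact ⟨1, 0, by simpa [eval_lf] using h⟩

lemma C_mul_eq_zero {s : ℂ} {u : P2} (hu : u ≠ 0) (h : C s * u = 0) : s = 0 := by
  rcases mul_eq_zero.mp h with h1 | h1
  · exact (MvPolynomial.C_eq_zero).mp h1
  · exact absurd h1 hu

lemma lf_scale (t a b : ℂ) : lf (t*a) (t*b) = C t * lf a b := by
  simp only [lf, map_mul]; ring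

-- expansions of products of linear forms in the monomial basis
lemma lf_cube_expand (a b : ℂ) : lf a b ^ 3
    = C (b^3) * (Xv^3) + C (-(3*a*b^2)) * (Xv^2*Yv^1)
      + C (3*a^2*b) * (Xv^1*Yv^2) + C (-(a^3)) * (Yv^3) := by
  simp only [lf, map_mul, map_pow, map_neg, map_ofNat]
  ring

lemma lf_sq_lf_expand (a b c d : ℂ) : lf c d ^ 2 * lf a b
    = C (b*d^2) * (Xv^3) + C (-(a*d^2 + 2*b*c*d)) * (Xv^2*Yv^1)
      + C (2*a*c*d + b*c^2) * (Xv^1*Yv^2) + C (-(a*c^2)) * (Yv^3) := by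
  simp only [lf, map_mul, map_pow, map_neg, map_add, map_ofNat]
  ring

lemma lf_sq_X_expand (a b : ℂ) : lf a b ^ 2 * Xv
    = C (b^2) * (Xv^3) + C (-(2*a*b)) * (Xv^2*Yv^1)
      + C (a^2) * (Xv^1*Yv^2) + C 0 * (Yv^3) := by
  simp only [lf, map_mul, map_pow, map_neg, map_ofNat, map_zero]
  ring

lemma lf_sq_Y_expand (a b : ℂ) : lf a b ^ 2 * Yv
    = C 0 * (Xv^3) + C (b^2) * (Xv^2*Yv^1)
      + C (-(2*a*b)) * (Xv^1*Yv^2) + C (a^2) * (Yv^3) := by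
  simp only [lf, map_mul, map_pow, map_neg, map_ofNat, map_zero]
  ring

-- cf of an explicit combination
lemma cf_combo (α β γ δ : ℂ) :
    cf 3 0 (C α * (Xv^3) + C β * (Xv^2*Yv^1) + C γ * (Xv^1*Yv^2) + C δ * (Yv^3)) = α
    ∧ cf 2 1 (C α * (Xv^3) + C β * (Xv^2*Yv^1) + C γ * (Xv^1*Yv^2) + C δ * (Yv^3)) = β
    ∧ cf 1 2 (C α * (Xv^3) + C β * (Xv^2*Yv^1) + C γ * (Xv^1*Yv^2) + C δ * (Yv^3)) = γ
    ∧ cf 0 3 (C α * (Xv^3) + C β * (Xv^2*Yv^1) + C γ * (Xv^1*Yv^2) + C δ * (Yv^3)) = δ := by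
  have h3 : (Xv^3 : P2) = Xv^3*Yv^0 := by ring
  have h0 : (Yv^3 : P2) = Xv^0*Yv^3 := by ring
  refine ⟨?_, ?_, ?_, ?_⟩ <;>
    · rw [h3, h0]
      simp only [cf_add, cf_C_mul, cf_mono]
      norm_num

-- eval of explicit combination
lemma eval_combo (α β γ δ x y : ℂ) :
    eval ![x,y] (C α * (Xv^3) + C β * (Xv^2*Yv^1) + C γ * (Xv^1*Yv^2) + C δ * (Yv^3))
      = α*x^3 + β*x^2*y + γ*x*y^2 + δ*y^3 := by
  simp [Xv, Yv]; ring

-- omegaForm basics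
lemma omega_self (p : P2) : omegaForm p p = 0 := by unfold omegaForm; ring
lemma omega_swap (p q : P2) : omegaForm p q = - omegaForm q p := by unfold omegaForm; ring
lemma omega_add_left (p p' q : P2) :
    omegaForm (p + p') q = omegaForm p q + omegaForm p' q := by
  unfold omegaForm; simp only [cf_add]; ring
lemma omega_smul_left (s : ℂ) (p q : P2) : omegaForm (s • p) q = s * omegaForm p q := by
  unfold omegaForm; simp only [cf_smul]; ring
lemma omega_combo (α β γ δ α' β' γ' δ' : ℂ) :
    omegaForm (C α * (Xv^3) + C β * (Xv^2*Yv^1) + C γ * (Xv^1*Yv^2) + C δ * (Yv^3))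
      (C α' * (Xv^3) + C β' * (Xv^2*Yv^1) + C γ' * (Xv^1*Yv^2) + C δ' * (Yv^3))
      = α*δ' - δ*α' - (1/3)*(β*γ' - γ*β') := by
  unfold omegaForm
  rw [(cf_combo α β γ δ).1, (cf_combo α β γ δ).2.1, (cf_combo α β γ δ).2.2.1,
    (cf_combo α β γ δ).2.2.2, (cf_combo α' β' γ' δ').1, (cf_combo α' β' γ' δ').2.1,
    (cf_combo α' β' γ' δ').2.2.1, (cf_combo α' β' γ' δ').2.2.2]

-- omega vanishes on a span of two vectors with vanishing pairings
lemma omega_span {u v : P2} (huv : omegaForm u v = 0) :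
    ∀ p ∈ Submodule.span ℂ {u, v}, ∀ q ∈ Submodule.span ℂ {u, v}, omegaForm p q = 0 := by
  intro p hp q hq
  obtain ⟨s, t, hst⟩ := Submodule.mem_span_pair.mp hp
  obtain ⟨s', t', hst'⟩ := Submodule.mem_span_pair.mp hq
  have hvu : omegaForm v u = 0 := by rw [omega_swap, huv, neg_zero]
  rw [← hst, ← hst', omega_add_left, omega_smul_left, omega_smul_left,
    omega_swap u _, omega_add_left, omega_smul_left, omega_smul_left,
    omega_swap v (_ + _), omega_add_left, omega_smul_left, omega_smul_left,
    omega_swap u u, omega_swap v u, omega_swap u v, omega_swap v v,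
    omega_self, omega_self, hvu]
  ring

-- membership of linear-form products in Vcubic
lemma lf_mem_hom1 (a b : ℂ) : lf a b ∈ homogeneousSubmodule (Fin 2) ℂ 1 := by
  rw [mem_homogeneousSubmodule]
  exact ((isHomogeneous_X ℂ 0).C_mul b).sub ((isHomogeneous_X ℂ 1).C_mul a)
lemma lf_cube_mem (a b : ℂ) : lf a b ^ 3 ∈ Vcubic := by
  rw [Vcubic, mem_homogeneousSubmodule]
  simpa using ((mem_homogeneousSubmodule _ _).mp (lf_mem_hom1 a b)).pow 3
lemma lf_sq_lf_mem (a b c d : ℂ) : lf c d ^ 2 * lf a b ∈ Vcubic := by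
  rw [Vcubic, mem_homogeneousSubmodule]
  have h2 : (lf c d ^ 2).IsHomogeneous 2 := by
    simpa using ((mem_homogeneousSubmodule _ _).mp (lf_mem_hom1 c d)).pow 2
  simpa using h2.mul ((mem_homogeneousSubmodule _ _).mp (lf_mem_hom1 a b))
lemma lf_sq_X_mem (a b : ℂ) : lf a b ^ 2 * Xv ∈ Vcubic := by
  rw [Vcubic, mem_homogeneousSubmodule]
  have h2 : (lf a b ^ 2).IsHomogeneous 2 := by
    simpa using ((mem_homogeneousSubmodule _ _).mp (lf_mem_hom1 a b)).pow 2
  simpa [Xv] using h2.mul (isHomogeneous_X ℂ 0)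
lemma lf_sq_Y_mem (a b : ℂ) : lf a b ^ 2 * Yv ∈ Vcubic := by
  rw [Vcubic, mem_homogeneousSubmodule]
  have h2 : (lf a b ^ 2).IsHomogeneous 2 := by
    simpa using ((mem_homogeneousSubmodule _ _).mp (lf_mem_hom1 a b)).pow 2
  simpa [Yv] using h2.mul (isHomogeneous_X ℂ 1)

lemma range_pair (u v : P2) : Set.range ![u, v] = {u, v} := by
  simp [Matrix.range_cons, Matrix.range_empty, Set.pair_comm v u]

lemma finrank_span_pair {u v : P2} (h : LinearIndependent ℂ ![u, v]) :
    Module.finrank ℂ (Submodule.span ℂ ({u, v} : Set P2)) = 2 := by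
  rw [← range_pair u v, finrank_span_eq_card h, Fintype.card_fin]

lemma li_pair {u v : P2} (hv : v ≠ 0) (h : ∀ s : ℂ, u ≠ s • v) :
    LinearIndependent ℂ ![u, v] := by
  rw [linearIndependent_fin2]
  refine ⟨by simpa using hv, fun s hs => h s ?_⟩
  simpa using hs.symm

lemma span_pair_smul_smul {s t : ℂ} (hs : s ≠ 0) (ht : t ≠ 0) (u v : P2) :
    Submodule.span ℂ ({s • u, t • v} : Set P2) = Submodule.span ℂ ({u, v} : Set P2) := by
  apply le_antisymm
  · rw [Submodule.span_le]
    rintro x (rfl | rfl)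
    · exact Submodule.smul_mem _ s (Submodule.subset_span (by left; rfl))
    · exact Submodule.smul_mem _ t (Submodule.subset_span (by right; rfl))
  · rw [Submodule.span_le]
    rintro x (rfl | rfl)
    · have h1 := Submodule.smul_mem (Submodule.span ℂ ({s • x, t • v} : Set P2)) s⁻¹
        (Submodule.subset_span (by left; rfl))
      simpa [smul_smul, inv_mul_cancel₀ hs] using h1
    · have h1 := Submodule.smul_mem (Submodule.span ℂ ({s • u, t • x} : Set P2)) t⁻¹
        (Submodule.subset_span (show t • x ∈ _ by right; rfl))
      simpa [smul_smul, inv_mul_cancel₀ ht] using h1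

lemma isLag_span {u v : P2} (hu : u ∈ Vcubic) (hv : v ∈ Vcubic)
    (hw : omegaForm u v = 0) (hind : LinearIndependent ℂ ![u, v]) :
    IsLagrangian (Submodule.span ℂ ({u, v} : Set P2)) := by
  refine ⟨?_, finrank_span_pair hind, omega_span hw⟩
  rw [Submodule.span_le]
  rintro x (rfl | rfl)
  exacts [hu, hv]

lemma mem_divisibleSub {q p : P2} : p ∈ divisibleSub q ↔ q ∣ p := by
  rw [divisibleSub, Submodule.restrictScalars_mem, Ideal.mem_span_singleton]

-- Lemma A
lemma diag_span {a b : ℂ} (hab : a ≠ 0 ∨ b ≠ 0) :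
    Vcubic ⊓ divisibleSub (lf a b ^ 2)
      = Submodule.span ℂ ({lf a b ^ 2 * Xv, lf a b ^ 2 * Yv} : Set P2) := by
  apply le_antisymm
  · rintro p ⟨hpV, hpD⟩
    obtain ⟨f, rfl⟩ := mem_divisibleSub.mp hpD
    have h2 : (lf a b ^ 2).IsHomogeneous 2 := by
      simpa using ((mem_homogeneousSubmodule _ _).mp (lf_mem_hom1 a b)).pow 2
    have key : lf a b ^ 2 * f = lf a b ^ 2 * homogeneousComponent 1 f := by
      have hsum : lf a b ^ 2 * f
          = ∑ i ∈ Finset.range (f.totalDegree + 1), lf a b ^ 2 * homogeneousComponent i f := by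
        rw [← Finset.mul_sum, sum_homogeneousComponent]
      have hc3 : homogeneousComponent 3 (lf a b ^ 2 * f) = lf a b ^ 2 * f := by
        have h := homogeneousComponent_of_mem (m := 3) hpV
        rwa [if_pos rfl] at h
      calc lf a b ^ 2 * f = homogeneousComponent 3 (lf a b ^ 2 * f) := hc3.symm
        _ = ∑ i ∈ Finset.range (f.totalDegree + 1),
              homogeneousComponent 3 (lf a b ^ 2 * homogeneousComponent i f) := by
            rw [hsum, map_sum]
        _ = ∑ i ∈ Finset.range (f.totalDegree + 1),
              (if i = 1 then lf a b ^ 2 * homogeneousComponent i f else 0) := by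
            refine Finset.sum_congr rfl (fun i _ => ?_)
            rw [homogeneousComponent_of_mem ((mem_homogeneousSubmodule _ _).mpr
              (h2.mul (homogeneousComponent_isHomogeneous i f)))]
            exact if_congr (by omega) rfl rfl
        _ = if 1 ∈ Finset.range (f.totalDegree + 1)
              then lf a b ^ 2 * homogeneousComponent 1 f else 0 :=
            Finset.sum_ite_eq' _ _ _
        _ = lf a b ^ 2 * homogeneousComponent 1 f := by
            split
            · rfl
            · rename_i hmem
              have ht : f.totalDegree = 0 := by
                simp only [Finset.mem_range] at hmem; omega
              rw [homogeneousComponent_eq_zero 1 f (by omega), mul_zero]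
    obtain hrep := lin_repr (homogeneousComponent_mem 1 f)
    set s := cf 1 0 (homogeneousComponent 1 f)
    set t := cf 0 1 (homogeneousComponent 1 f)
    rw [key, hrep]
    apply Submodule.mem_span_pair.mpr
    refine ⟨s, t, ?_⟩
    rw [smul_eq_C_mul, smul_eq_C_mul]
    ring
  · rw [Submodule.span_le]
    rintro x (rfl | rfl)
    · exact ⟨lf_sq_X_mem a b, mem_divisibleSub.mpr ⟨Xv, rfl⟩⟩
    · exact ⟨lf_sq_Y_mem a b, mem_divisibleSub.mpr ⟨Yv, rfl⟩⟩

lemma proj_scale {a b a' b' : ℂ} (h : a ≠ 0 ∨ b ≠ 0) (h' : a' ≠ 0 ∨ b' ≠ 0)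
    (he : a * b' = a' * b) : ∃ t : ℂ, t ≠ 0 ∧ a' = t * a ∧ b' = t * b := by
  rcases eq_or_ne a 0 with rfl | ha
  · have hb : b ≠ 0 := h.resolve_left (by simp)
    have ha' : a' = 0 := by
      have : a' * b = 0 := by rw [← he]; ring
      exact (mul_eq_zero.mp this).resolve_right hb
    have hb' : b' ≠ 0 := h'.resolve_left (by simp [ha'])
    exact ⟨b' / b, div_ne_zero hb' hb, by rw [ha']; ring, by field_simp⟩
  · have ha' : a' ≠ 0 := by
      intro h0
      have : b' = 0 := by
        have : a * b' = 0 := by rw [he, h0]; ring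
        exact (mul_eq_zero.mp this).resolve_left ha
      exact (h'.resolve_left (by simp [h0])) this
    refine ⟨a' / a, div_ne_zero ha' ha, by field_simp, ?_⟩
    field_simp
    linear_combination he

lemma divisibleSub_scale {t : ℂ} (ht : t ≠ 0) (u : P2) :
    divisibleSub (C t * u) = divisibleSub u := by
  ext x
  rw [mem_divisibleSub, mem_divisibleSub]
  constructor
  · rintro ⟨g, rfl⟩
    exact ⟨C t * g, by ring⟩
  · rintro ⟨g, rfl⟩
    exact ⟨C t⁻¹ * g, by rw [show C t * u * (C t⁻¹ * g) = (C t * C t⁻¹) * (u * g) by ring,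
      ← map_mul, mul_inv_cancel₀ ht, map_one, one_mul]⟩

lemma gmap_welldef (a b c d a' b' c' d' : ℂ)
    (h1 : a ≠ 0 ∨ b ≠ 0) (h2 : c ≠ 0 ∨ d ≠ 0) (h3 : a' ≠ 0 ∨ b' ≠ 0) (h4 : c' ≠ 0 ∨ d' ≠ 0)
    (hab : a * b' = a' * b) (hcd : c * d' = c' * d) :
    gmap a b c d = gmap a' b' c' d' := by
  obtain ⟨t, ht, rfl, rfl⟩ := proj_scale h1 h3 hab
  obtain ⟨s, hs, rfl, rfl⟩ := proj_scale h2 h4 hcd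
  have hl : lf (t*a) (t*b) = C t * lf a b := lf_scale t a b
  have hm : lf (s*c) (s*d) = C s * lf c d := lf_scale s c d
  have hcond : t*a*(s*d) - t*b*(s*c) = t*s*(a*d - b*c) := by ring
  unfold gmap
  by_cases h : a * d - b * c = 0
  · rw [if_pos h, if_pos (by rw [hcond, h]; ring)]
    refine congrArg (Vcubic ⊓ ·) ?_
    rw [hl, mul_pow, ← map_pow]
    exact (divisibleSub_scale (pow_ne_zero 2 ht) _).symm
  · rw [if_neg h, if_neg (by rw [hcond]; exact mul_ne_zero (mul_ne_zero ht hs) h)]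
    rw [hl, hm,
      show (C t * lf a b) ^ 3 = (t^3) • lf a b ^ 3 by
        rw [smul_eq_C_mul, map_pow]; ring,
      show (C s * lf c d) ^ 2 * (C t * lf a b) = (s^2*t) • (lf c d ^ 2 * lf a b) by
        rw [smul_eq_C_mul, map_mul, map_pow]; ring]
    exact (span_pair_smul_smul (pow_ne_zero 3 ht) (mul_ne_zero (pow_ne_zero 2 hs) ht) _ _).symm

lemma Xv_sub_ne (s : ℂ) : Xv - C s * Yv ≠ 0 := by
  intro h0
  have h1 := congrArg (cf 1 0) h0
  rw [show Xv - C s * Yv = Xv^1*Yv^0 + C (-s) * (Xv^0*Yv^1) by rw [map_neg]; ring] at h1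
  rw [cf_add, cf_C_mul, cf_mono, cf_mono, cf_zero] at h1
  norm_num at h1

lemma lf_sq_ne_zero {a b : ℂ} (h : a ≠ 0 ∨ b ≠ 0) : lf a b ^ 2 ≠ 0 :=
  pow_ne_zero 2 (lf_ne_zero h)

lemma cube_mem_gmap (a b c d : ℂ) : lf a b ^ 3 ∈ gmap a b c d := by
  unfold gmap
  split
  · exact ⟨lf_cube_mem a b, mem_divisibleSub.mpr ⟨lf a b, by ring⟩⟩
  · exact Submodule.subset_span (by left; rfl)

lemma gmap_lagrangian (a b c d : ℂ) (h1 : a ≠ 0 ∨ b ≠ 0) (h2 : c ≠ 0 ∨ d ≠ 0) :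
    IsLagrangian (gmap a b c d) := by
  unfold gmap
  split
  · -- diagonal case
    rw [diag_span h1]
    apply isLag_span (lf_sq_X_mem a b) (lf_sq_Y_mem a b)
    · rw [lf_sq_X_expand, lf_sq_Y_expand, omega_combo]; ring
    · apply li_pair (mul_ne_zero (lf_sq_ne_zero h1) (by exact X_ne_zero 1))
      intro s hs
      rw [smul_eq_C_mul] at hs
      have h0 : lf a b ^ 2 * (Xv - C s * Yv) = 0 := by linear_combination hs
      rcases mul_eq_zero.mp h0 with h | h
      · exact lf_sq_ne_zero h1 h
      · exact Xv_sub_ne s h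
  · -- off-diagonal case
    rename_i hnd
    apply isLag_span (lf_cube_mem a b) (lf_sq_lf_mem a b c d)
    · rw [lf_cube_expand, lf_sq_lf_expand, omega_combo]; ring
    · apply li_pair (mul_ne_zero (lf_sq_ne_zero h2) (lf_ne_zero h1))
      intro s hs
      apply hnd
      have h0 := congrArg (eval ![c,d]) hs
      rw [map_pow, eval_lf] at h0
      rw [show (s • (lf c d ^ 2 * lf a b)) = C s * (lf c d ^2 * lf a b) from smul_eq_C_mul ..] at h0
      rw [map_mul, map_mul, map_pow, eval_lf, eval_lf, eval_C] at h0
      have h3 : (b*c - a*d)^3 = 0 := by rw [h0]; ring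
      have h4 : b*c - a*d = 0 := pow_eq_zero_iff (by norm_num) |>.mp h3
      linear_combination -h4

lemma gmap_cube (a b c d : ℂ) (h1 : a ≠ 0 ∨ b ≠ 0) :
    ∃ p ∈ gmap a b c d, IsPerfectCube p :=
  ⟨lf a b ^ 3, cube_mem_gmap a b c d, 1, a, b, one_ne_zero, h1, by rw [map_one, one_mul]⟩

lemma eval_gmap_zero (a b c d : ℂ) {p : P2} (hp : p ∈ gmap a b c d) :
    eval ![a,b] p = 0 := by
  unfold gmap at hp
  split at hp
  · obtain ⟨f, hf⟩ := mem_divisibleSub.mp hp.2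
    rw [hf, map_mul, map_pow, eval_lf]
    ring
  · refine Submodule.span_induction ?_ ?_ ?_ ?_ hp
    · rintro x (rfl | rfl)
      · rw [map_pow, eval_lf]; ring
      · rw [map_mul, map_pow, eval_lf, eval_lf]; ring
    · simp
    · intro x y _ _ hx hy; rw [map_add, hx, hy, add_zero]
    · intro s x _ hx
      rw [smul_eq_C_mul, map_mul, eval_C, hx, mul_zero]

-- from a span membership identity, cancel a factor of lf a b
lemma cancel_lf {a b : ℂ} (h1 : a ≠ 0 ∨ b ≠ 0) {u v : P2} (h : u * lf a b = v * lf a b) :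
    u = v := by
  have h0 : (u - v) * lf a b = 0 := by linear_combination h
  rcases mul_eq_zero.mp h0 with h' | h'
  · exact sub_eq_zero.mp h'
  · exact absurd h' (lf_ne_zero h1)

lemma inj_same (a b c d c' d' : ℂ) (h1 : a ≠ 0 ∨ b ≠ 0) (h2 : c ≠ 0 ∨ d ≠ 0)
    (h4 : c' ≠ 0 ∨ d' ≠ 0) (heq : gmap a b c d = gmap a b c' d') : c * d' = c' * d := by
  -- helper: a nondiagonal value can never equal the diagonal value
  have nd : ∀ e f : ℂ, a * f - b * e ≠ 0 →
      Vcubic ⊓ divisibleSub (lf a b ^ 2) ≠ Submodule.span ℂ {lf a b ^ 3, lf e f ^ 2 * lf a b} := by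
    intro e f hef hcontra
    have hmem : lf e f ^ 2 * lf a b ∈ Vcubic ⊓ divisibleSub (lf a b ^ 2) := by
      rw [hcontra]; exact Submodule.subset_span (by right; rfl)
    obtain ⟨g, hg⟩ := mem_divisibleSub.mp hmem.2
    have hq : lf e f ^ 2 = lf a b * g := by
      apply cancel_lf h1 (v := lf a b * g)
      linear_combination hg
    have := congrArg (eval ![a,b]) hq
    rw [map_pow, map_mul, eval_lf, eval_lf] at this
    apply hef
    have h3 : (f*a - e*b)^2 = 0 := by rw [this]; ring
    have h4 : f*a - e*b = 0 := pow_eq_zero_iff (by norm_num) |>.mp h3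
    linear_combination h4
  unfold gmap at heq
  by_cases h : a * d - b * c = 0 <;> by_cases h' : a * d' - b * c' = 0
  · -- both diagonal
    rcases eq_or_ne a 0 with rfl | ha
    · have hb : b ≠ 0 := h1.resolve_left (by simp)
      have hc : c = 0 := by
        have : b * c = 0 := by linear_combination -h
        exact (mul_eq_zero.mp this).resolve_left hb
      have hc' : c' = 0 := by
        have : b * c' = 0 := by linear_combination -h'
        exact (mul_eq_zero.mp this).resolve_left hb
      rw [hc, hc']; ring
    · apply mul_left_cancel₀ ha
      linear_combination c * h' - c' * h
  · rw [if_pos h, if_neg h'] at heq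
    exact absurd heq (nd c' d' h')
  · rw [if_neg h, if_pos h'] at heq
    exact absurd heq.symm (nd c d h)
  · -- both nondiagonal
    rw [if_neg h, if_neg h'] at heq
    set A := a * d' - b * c' with hA
    set B := a * d - b * c with hB
    set M := c * d' - c' * d with hM
    have hmem1 : lf c' d' ^ 2 * lf a b ∈ Submodule.span ℂ {lf a b ^ 3, lf c d ^ 2 * lf a b} := by
      rw [heq]; exact Submodule.subset_span (by right; rfl)
    obtain ⟨α, β, hαβ⟩ := Submodule.mem_span_pair.mp hmem1
    rw [smul_eq_C_mul, smul_eq_C_mul] at hαβ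
    have hq1 : lf c' d' ^ 2 = C α * lf a b ^ 2 + C β * lf c d ^ 2 := by
      apply cancel_lf h1
      rw [← hαβ]; ring
    have hmem2 : lf c d ^ 2 * lf a b ∈ Submodule.span ℂ {lf a b ^ 3, lf c' d' ^ 2 * lf a b} := by
      rw [← heq]; exact Submodule.subset_span (by right; rfl)
    obtain ⟨α', β', hαβ'⟩ := Submodule.mem_span_pair.mp hmem2
    rw [smul_eq_C_mul, smul_eq_C_mul] at hαβ'
    have hq2 : lf c d ^ 2 = C α' * lf a b ^ 2 + C β' * lf c' d' ^ 2 := by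
      apply cancel_lf h1
      rw [← hαβ']; ring
    have E1 := congrArg (eval ![a,b]) hq1
    rw [map_add, map_mul, map_mul, map_pow, map_pow, map_pow, eval_C, eval_C,
      eval_lf, eval_lf, eval_lf] at E1
    have E1' : A^2 = β * B^2 := by rw [hA, hB]; linear_combination E1
    have E2 := congrArg (eval ![c',d']) hq1
    rw [map_add, map_mul, map_mul, map_pow, map_pow, map_pow, eval_C, eval_C,
      eval_lf, eval_lf, eval_lf] at E2
    have E2' : 0 = α * A^2 + β * M^2 := by rw [hA, hM]; linear_combination E2
    have E3 := congrArg (eval ![a,b]) hq2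
    rw [map_add, map_mul, map_mul, map_pow, map_pow, map_pow, eval_C, eval_C,
      eval_lf, eval_lf, eval_lf] at E3
    have E3' : B^2 = β' * A^2 := by rw [hA, hB]; linear_combination E3
    have E4 := congrArg (eval ![c,d]) hq2
    rw [map_add, map_mul, map_mul, map_pow, map_pow, map_pow, eval_C, eval_C,
      eval_lf, eval_lf, eval_lf] at E4
    have E4' : 0 = α' * B^2 + β' * M^2 := by rw [hB, hM]; linear_combination E4
    have h5 : C (1 - β*β') * lf c' d' ^ 2 = C (α + β*α') * lf a b ^ 2 := by
      rw [map_sub, map_add, map_mul, map_mul, map_one]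
      calc (1 - C β * C β') * lf c' d' ^ 2
          = lf c' d' ^2 - C β * (C β' * lf c' d' ^2) := by ring
        _ = (C α + C β * C α') * lf a b ^ 2 := by
            nth_rewrite 1 [hq1]
            rw [show C β' * lf c' d' ^ 2 = lf c d ^2 - C α' * lf a b ^2 by
              rw [hq2]; ring]
            ring
    have E5 := congrArg (eval ![a,b]) h5
    rw [map_mul, map_mul, map_pow, map_pow, eval_C, eval_C, eval_lf, eval_lf] at E5
    have hAne : A ≠ 0 := h'
    have hBne : B ≠ 0 := h
    have hββ' : 1 - β * β' = 0 := by
      have : (1 - β*β') * A^2 = 0 := by rw [hA]; linear_combination E5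
      rcases mul_eq_zero.mp this with h6 | h6
      · exact h6
      · exact absurd (pow_eq_zero_iff (by norm_num) |>.mp h6) hAne
    have hα : α + β * α' = 0 := by
      rw [hββ', map_zero, zero_mul] at h5
      exact C_mul_eq_zero (lf_sq_ne_zero h1) h5.symm
    have hβ : β ≠ 0 := by
      intro h0
      rw [h0, zero_mul] at E1'
      exact hAne (pow_eq_zero_iff (by norm_num) |>.mp E1')
    have hM2 : M^2 = α' * A^2 := by
      apply mul_left_cancel₀ hβ
      linear_combination -E2' - A^2 * hα
    have hα' : α' = 0 := by
      have h20 : α' * (2 * B^2) = 0 := by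
        linear_combination -E4' - β' * hM2 + α' * E3'
      rcases mul_eq_zero.mp h20 with h6 | h6
      · exact h6
      · exfalso
        apply hBne
        have : B^2 = 0 := by linear_combination h6 / 2
        exact pow_eq_zero_iff (by norm_num) |>.mp this
    have : M = 0 := by
      have : M^2 = 0 := by rw [hM2, hα', zero_mul]
      exact pow_eq_zero_iff (by norm_num) |>.mp this
    rw [hM] at this
    linear_combination this

-- complex square roots
lemma exists_sqrt (z : ℂ) : ∃ w : ℂ, w^2 = z := by
  rcases IsAlgClosed.exists_pow_nat_eq z (n := 2) (by norm_num) with ⟨w, hw⟩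
  exact ⟨w, hw⟩

-- the swap automorphism
def tau : P2 ≃ₐ[ℂ] P2 := renameEquiv ℂ (Equiv.swap (0 : Fin 2) 1)

lemma tau_apply (p : P2) : tau p = rename (Equiv.swap (0:Fin 2) 1) p := rfl
lemma tau_Xv : tau Xv = Yv := by
  rw [tau_apply, Xv, Yv, rename_X, Equiv.swap_apply_left]
lemma tau_Yv : tau Yv = Xv := by
  rw [tau_apply, Xv, Yv, rename_X, Equiv.swap_apply_right]
lemma tau_C (x : ℂ) : tau (C x) = C x := by rw [tau_apply, rename_C]
lemma tau_lf (a b : ℂ) : tau (lf a b) = -(lf b a) := by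
  rw [lf, map_sub, map_mul, map_mul, tau_C, tau_C, tau_Xv, tau_Yv, lf]
  ring
lemma tau_tau (p : P2) : tau (tau p) = p := by
  rw [tau_apply, tau_apply, rename_rename]
  rw [show (⇑(Equiv.swap (0:Fin 2) 1) ∘ ⇑(Equiv.swap (0:Fin 2) 1)) = id from
    funext (fun i => Equiv.swap_apply_self _ _ i), rename_id, AlgHom.id_apply]

def tmap (W : Submodule ℂ P2) : Submodule ℂ P2 := W.map tau.toLinearMap

lemma tau_inj : Function.Injective (tau.toLinearMap : P2 →ₗ[ℂ] P2) := by
  intro x y h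
  have : tau x = tau y := h
  exact tau.injective this

lemma mem_tmap {W : Submodule ℂ P2} {x : P2} : x ∈ tmap W ↔ tau x ∈ W := by
  constructor
  · rintro ⟨y, hy, rfl⟩
    have : tau (tau.toLinearMap y) = y := tau_tau y
    rwa [this]
  · intro h
    exact ⟨tau x, h, tau_tau x⟩

lemma tmap_span_pair (u v : P2) :
    tmap (Submodule.span ℂ ({u, v} : Set P2)) = Submodule.span ℂ ({tau u, tau v} : Set P2) := by
  rw [tmap, Submodule.map_span, Set.image_pair]
  rfl

lemma tmap_Vcubic : tmap Vcubic = Vcubic := by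
  ext x
  rw [mem_tmap]
  constructor
  · intro h
    have h2 : (tau (tau x)).IsHomogeneous 3 :=
      ((mem_homogeneousSubmodule _ _).mp h).rename_isHomogeneous
    rw [tau_tau] at h2
    exact (mem_homogeneousSubmodule _ _).mpr h2
  · intro h
    exact (mem_homogeneousSubmodule _ _).mpr
      ((mem_homogeneousSubmodule _ _).mp h).rename_isHomogeneous

lemma tmap_div (u : P2) : tmap (divisibleSub u) = divisibleSub (tau u) := by
  ext x
  rw [mem_tmap, mem_divisibleSub, mem_divisibleSub]
  constructor
  · rintro ⟨g, hg⟩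
    refine ⟨tau g, ?_⟩
    have := congrArg tau hg
    rwa [tau_tau, map_mul] at this
  · rintro ⟨g, hg⟩
    exact ⟨tau g, by rw [hg, map_mul, tau_tau]⟩

lemma tmap_inf (A B : Submodule ℂ P2) : tmap (A ⊓ B) = tmap A ⊓ tmap B :=
  Submodule.map_inf _ tau_inj

lemma eval_tau (x y : ℂ) (p : P2) : eval ![x,y] (tau p) = eval ![y,x] p := by
  rw [tau_apply, eval_rename,
    show (![x,y] ∘ ⇑(Equiv.swap (0:Fin 2) 1)) = ![y,x] from
      funext (fun i => by fin_cases i <;> simp)]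

lemma neg_lf_sq (a b : ℂ) : (-(lf a b))^2 = lf a b ^2 := by ring
lemma span_pair_neg_neg (u v : P2) :
    Submodule.span ℂ ({-u, -v} : Set P2) = Submodule.span ℂ ({u, v} : Set P2) := by
  have h := span_pair_smul_smul (s := (-1 : ℂ)) (t := (-1 : ℂ)) (by norm_num) (by norm_num) u v
  simpa using h

lemma tmap_gmap (a b c d : ℂ) : tmap (gmap a b c d) = gmap b a d c := by
  unfold gmap
  by_cases h : a * d - b * c = 0
  · rw [if_pos h, if_pos (by linear_combination -h)]
    rw [tmap_inf, tmap_Vcubic, tmap_div, map_pow, tau_lf, neg_lf_sq]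
  · rw [if_neg h, if_neg (fun h' => h (by linear_combination -h'))]
    rw [tmap_span_pair, map_pow, map_mul, map_pow, tau_lf, tau_lf,
      show (-(lf b a))^3 = -(lf b a ^3) by ring,
      show (-(lf d c))^2 * (-(lf b a)) = -(lf d c ^2 * lf b a) by ring,
      span_pair_neg_neg]

lemma lf_cube_ne_zero {a b : ℂ} (h : a ≠ 0 ∨ b ≠ 0) : lf a b ^ 3 ≠ 0 :=
  pow_ne_zero 3 (lf_ne_zero h)

lemma finrank_span_cube_q {a b : ℂ} (hab : a ≠ 0 ∨ b ≠ 0) {q : P2}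
    (hni : ∀ s : ℂ, q ≠ s • lf a b ^ 3) :
    Module.finrank ℂ (Submodule.span ℂ ({lf a b ^ 3, q} : Set P2)) = 2 := by
  rw [Set.pair_comm]
  exact finrank_span_pair (li_pair (lf_cube_ne_zero hab) hni)

lemma span_eq_gmap_of_le {a b c d : ℂ} (hab : a ≠ 0 ∨ b ≠ 0) (hcd : c ≠ 0 ∨ d ≠ 0) {q : P2}
    (hni : ∀ s : ℂ, q ≠ s • lf a b ^ 3)
    (hle : Submodule.span ℂ ({lf a b ^ 3, q} : Set P2) ≤ gmap a b c d) :
    Submodule.span ℂ ({lf a b ^ 3, q} : Set P2) = gmap a b c d := by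
  have hfr : Module.finrank ℂ (gmap a b c d) = 2 := (gmap_lagrangian a b c d hab hcd).2.1
  have : FiniteDimensional ℂ (gmap a b c d) :=
    FiniteDimensional.of_finrank_pos (by rw [hfr]; norm_num)
  exact Submodule.eq_of_le_of_finrank_le hle
    (by rw [hfr, finrank_span_cube_q hab hni])

lemma lf_mul_quad_expand (a b α β γ : ℂ) :
    lf a b * (C α * Xv^2 + C β * (Xv*Yv) + C γ * Yv^2)
      = C (b*α) * (Xv^3) + C (b*β - a*α) * (Xv^2*Yv^1)
        + C (b*γ - a*β) * (Xv^1*Yv^2) + C (-(a*γ)) * (Yv^3) := by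
  simp only [lf, map_mul, map_sub, map_neg]
  ring

lemma lf_sq_lin_expand (a b s t : ℂ) :
    lf a b ^ 2 * (C s * Xv + C t * Yv)
      = C (b^2*s) * (Xv^3) + C (b^2*t - 2*a*b*s) * (Xv^2*Yv^1)
        + C (a^2*s - 2*a*b*t) * (Xv^1*Yv^2) + C (a^2*t) * (Yv^3) := by
  simp only [lf, map_mul, map_sub, map_neg, map_pow, map_ofNat]
  ring

lemma key_b {a b : ℂ} (hb : b ≠ 0) {q : P2} (hqV : q ∈ Vcubic)
    (he : eval ![a,b] q = 0) (hni : ∀ s : ℂ, q ≠ s • lf a b ^ 3) :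
    ∃ c d : ℂ, (c ≠ 0 ∨ d ≠ 0) ∧
      Submodule.span ℂ ({lf a b ^ 3, q} : Set P2) = gmap a b c d := by
  have hab : a ≠ 0 ∨ b ≠ 0 := Or.inr hb
  obtain ⟨α, β, γ, hfac⟩ : ∃ α β γ : ℂ,
      q = lf a b * (C α * Xv^2 + C β * (Xv*Yv) + C γ * Yv^2) := by
    have hrep := cubic_repr hqV
    rw [hrep, eval_combo] at he
    refine ⟨cf 3 0 q / b, (b * cf 2 1 q + a * cf 3 0 q) / b^2,
      (b^2 * cf 1 2 q + a*b* cf 2 1 q + a^2 * cf 3 0 q) / b^3, ?_⟩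
    have h1 : b * (cf 3 0 q / b) = cf 3 0 q := by field_simp
    have h2 : b * ((b * cf 2 1 q + a * cf 3 0 q) / b^2) - a * (cf 3 0 q / b) = cf 2 1 q := by
      field_simp; ring
    have h3 : b * ((b^2 * cf 1 2 q + a*b* cf 2 1 q + a^2 * cf 3 0 q) / b^3)
        - a * ((b * cf 2 1 q + a * cf 3 0 q) / b^2) = cf 1 2 q := by
      field_simp; ring
    have h4 : -(a * ((b^2 * cf 1 2 q + a*b* cf 2 1 q + a^2 * cf 3 0 q) / b^3)) = cf 0 3 q := by
      field_simp
      linear_combination -he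
    rw [lf_mul_quad_expand, h1, h2, h3, h4]
    exact hrep
  by_cases hke : a^2*α + a*b*β + b^2*γ = 0
  · -- diagonal case : q divisible by lf a b ^ 2
    obtain ⟨s, t, hs1, hs2, hs3⟩ : ∃ s t : ℂ,
        b*s = α ∧ b*t - a*s = β ∧ -(a*t) = γ := by
      refine ⟨α / b, (b*β + a*α) / b^2, by field_simp, by field_simp; ring, ?_⟩
      have hb2 : (b:ℂ)^2 ≠ 0 := pow_ne_zero _ hb
      apply mul_left_cancel₀ hb2
      rw [show b^2 * (-(a*((b*β + a*α) / b^2))) = -(a*(b*β + a*α)) * (b^2 / b^2) by ring,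
        div_self hb2]
      linear_combination -hke
    have hfac2 : q = lf a b ^ 2 * (C s * Xv + C t * Yv) := by
      rw [hfac, lf_sq_lin_expand, lf_mul_quad_expand,
        show b^2*s = b*α by rw [← hs1]; ring,
        show b^2*t - 2*a*b*s = b*β - a*α by rw [← hs1, ← hs2]; ring,
        show a^2*s - 2*a*b*t = b*γ - a*β by rw [← hs2, ← hs3]; ring,
        show a^2*t = -(a*γ) by rw [← hs3]; ring]
    refine ⟨a, b, Or.inr hb, ?_⟩
    have hgd : gmap a b a b = Vcubic ⊓ divisibleSub (lf a b ^ 2) := by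
      unfold gmap
      rw [if_pos (by ring)]
    apply span_eq_gmap_of_le hab (Or.inr hb) hni
    rw [hgd]
    rw [Submodule.span_le]
    rintro x (rfl | rfl)
    · exact ⟨lf_cube_mem a b, mem_divisibleSub.mpr ⟨lf a b, by ring⟩⟩
    · exact ⟨hqV, mem_divisibleSub.mpr ⟨C s * Xv + C t * Yv, hfac2⟩⟩
  · -- off-diagonal case
    obtain ⟨lam, hlam⟩ : ∃ l : ℂ, l * (4*(a^2*α + a*b*β + b^2*γ)) = β^2 - 4*α*γ :=
      ⟨(β^2 - 4*α*γ) / (4*(a^2*α + a*b*β + b^2*γ)), by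
        rw [div_mul_cancel₀]; intro h0; apply hke; linear_combination h0 / 4⟩
    obtain ⟨c, d, hd2, hcd2, hc2⟩ : ∃ c d : ℂ,
        d^2 = α + lam*b^2 ∧ -(2*(c*d)) = β - 2*lam*a*b ∧ c^2 = γ + lam*a^2 := by
      have hdisc : (β - 2*lam*a*b)^2 = 4*(α + lam*b^2)*(γ + lam*a^2) := by
        linear_combination -hlam
      by_cases hA : α + lam*b^2 = 0
      · obtain ⟨cc, hcc⟩ := exists_sqrt (γ + lam*a^2)
        refine ⟨cc, 0, by rw [hA]; ring, ?_, hcc⟩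
        have hB2 : (β - 2*lam*a*b)^2 = 0 := by rw [hdisc, hA]; ring
        have hB : β - 2*lam*a*b = 0 := pow_eq_zero_iff (by norm_num) |>.mp hB2
        rw [hB]; ring
      · obtain ⟨dd, hdd⟩ := exists_sqrt (α + lam*b^2)
        have hddne : dd ≠ 0 := fun h0 => hA (by rw [← hdd, h0]; ring)
        refine ⟨-(β - 2*lam*a*b)/(2*dd), dd, hdd, by field_simp, ?_⟩
        field_simp
        linear_combination hdisc - 4*(γ + lam*a^2)*hdd
    have hm2 : lf c d ^ 2
        = (C α * Xv^2 + C β * (Xv*Yv) + C γ * Yv^2) + C lam * lf a b ^ 2 := by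
      rw [show lf c d ^2 = C (d^2) * Xv^2 + C (-(2*(c*d))) * (Xv*Yv) + C (c^2) * Yv^2 by
        simp only [lf, map_mul, map_neg, map_pow, map_ofNat]; ring]
      rw [hd2, hcd2, hc2]
      simp only [lf, map_add, map_sub, map_mul, map_pow, map_ofNat]
      ring
    have hnd : a*d - b*c ≠ 0 := by
      intro h0
      apply hke
      have hev := congrArg (eval ![a,b]) hm2
      rw [map_pow, eval_lf] at hev
      rw [map_add, map_mul, map_pow, eval_C, eval_lf] at hev
      rw [show ((eval ![a,b]) (C α * Xv^2 + C β * (Xv*Yv) + C γ * Yv^2))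
          = α*a^2 + β*(a*b) + γ*b^2 by simp [Xv, Yv]] at hev
      have : (a*d - b*c)^2 = a^2*α + a*b*β + b^2*γ := by
        rw [show (a*d-b*c)^2 = (d*a-c*b)^2 by ring, hev]; ring
      rw [h0] at this
      linear_combination -this
    have hcdne : c ≠ 0 ∨ d ≠ 0 := by
      by_contra hx
      push_neg at hx
      apply hnd
      rw [hx.1, hx.2]; ring
    refine ⟨c, d, hcdne, ?_⟩
    apply span_eq_gmap_of_le hab hcdne hni
    have hgd : gmap a b c d = Submodule.span ℂ {lf a b ^ 3, lf c d ^ 2 * lf a b} := by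
      unfold gmap
      rw [if_neg hnd]
    rw [hgd, Submodule.span_le]
    rintro x (rfl | rfl)
    · exact Submodule.subset_span (by left; rfl)
    · apply Submodule.mem_span_pair.mpr
      refine ⟨-lam, 1, ?_⟩
      rw [smul_eq_C_mul, smul_eq_C_mul, map_one, map_neg, one_mul, hfac]
      linear_combination (lf a b) * hm2

lemma span_pair_neg_left (u v : P2) :
    Submodule.span ℂ ({-u, v} : Set P2) = Submodule.span ℂ ({u, v} : Set P2) := by
  have h := span_pair_smul_smul (s := (-1 : ℂ)) (t := (1 : ℂ)) (by norm_num) (by norm_num) u v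
  simpa using h

lemma key {a b : ℂ} (hab : a ≠ 0 ∨ b ≠ 0) {q : P2} (hqV : q ∈ Vcubic)
    (he : eval ![a,b] q = 0) (hni : ∀ s : ℂ, q ≠ s • lf a b ^ 3) :
    ∃ c d : ℂ, (c ≠ 0 ∨ d ≠ 0) ∧
      Submodule.span ℂ ({lf a b ^ 3, q} : Set P2) = gmap a b c d := by
  rcases eq_or_ne b 0 with rfl | hb
  · have ha : a ≠ 0 := hab.resolve_right (fun h => h rfl)
    have hqV' : tau q ∈ Vcubic := by
      have h1 : tau q ∈ tmap Vcubic := mem_tmap.mpr (by rw [tau_tau]; exact hqV)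
      rwa [tmap_Vcubic] at h1
    have he' : eval ![(0:ℂ), a] (tau q) = 0 := by rw [eval_tau]; exact he
    have hni' : ∀ s : ℂ, tau q ≠ s • lf 0 a ^ 3 := by
      intro s h
      apply hni (-s)
      have h2 := congrArg tau h
      rw [tau_tau, map_smul, map_pow, tau_lf] at h2
      rw [h2]
      rw [show (-(lf a 0))^3 = -(lf a 0 ^3) by ring, smul_neg, ← neg_smul]
    obtain ⟨c, d, hcd, hspan⟩ := key_b ha hqV' he' hni'
    refine ⟨d, c, hcd.symm, ?_⟩
    have h3 := congrArg tmap hspan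
    rw [tmap_span_pair, map_pow, tau_lf, tau_tau, tmap_gmap,
      show (-(lf a 0))^3 = -(lf a 0 ^3) by ring, span_pair_neg_left] at h3
    exact h3
  · exact key_b hb hqV he hni

lemma omega_cube_eval (a b : ℂ) {q : P2} (hq : q ∈ Vcubic) :
    omegaForm (lf a b ^ 3) q = eval ![a,b] q := by
  conv_rhs => rw [cubic_repr hq, eval_combo]
  unfold omegaForm
  rw [show cf 3 0 (lf a b ^3) = b^3 by rw [lf_cube_expand]; exact (cf_combo _ _ _ _).1,
    show cf 2 1 (lf a b ^3) = -(3*a*b^2) by rw [lf_cube_expand]; exact (cf_combo _ _ _ _).2.1,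
    show cf 1 2 (lf a b ^3) = 3*a^2*b by rw [lf_cube_expand]; exact (cf_combo _ _ _ _).2.2.1,
    show cf 0 3 (lf a b ^3) = -(a^3) by rw [lf_cube_expand]; exact (cf_combo _ _ _ _).2.2.2]
  ring

lemma lagrangian_cube_to_gmap {W : Submodule ℂ P2} (hL : IsLagrangian W)
    (hex : ∃ p ∈ W, IsPerfectCube p) :
    ∃ a b c d : ℂ, (a ≠ 0 ∨ b ≠ 0) ∧ (c ≠ 0 ∨ d ≠ 0) ∧ W = gmap a b c d := by
  obtain ⟨hWV, hW2, hWω⟩ := hL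
  obtain ⟨p, hpW, c₀, a, b, hc₀, hab, rfl⟩ := hex
  have hcube : lf a b ^ 3 ∈ W := by
    have h1 : (c₀⁻¹ : ℂ) • (C c₀ * lf a b ^ 3) ∈ W := Submodule.smul_mem _ _ hpW
    rwa [smul_eq_C_mul, show C c₀⁻¹ * (C c₀ * lf a b ^3) = (C c₀⁻¹ * C c₀) * lf a b ^3 by ring,
      ← map_mul, inv_mul_cancel₀ hc₀, map_one, one_mul] at h1
  have hfd : FiniteDimensional ℂ W := FiniteDimensional.of_finrank_pos (by rw [hW2]; norm_num)
  have hnotle : ¬ W ≤ Submodule.span ℂ ({lf a b ^ 3} : Set P2) := by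
    intro hle
    have h1 := Submodule.finrank_mono hle
    rw [hW2, finrank_span_singleton (lf_cube_ne_zero hab)] at h1
    norm_num at h1
  obtain ⟨q, hqW, hqns⟩ := SetLike.not_le_iff_exists.mp hnotle
  have hni : ∀ s : ℂ, q ≠ s • lf a b ^ 3 := by
    rintro s rfl
    exact hqns (Submodule.mem_span_singleton.mpr ⟨s, rfl⟩)
  have hqV : q ∈ Vcubic := hWV hqW
  have he : eval ![a,b] q = 0 := by
    rw [← omega_cube_eval a b hqV]
    exact hWω _ hcube q hqW
  obtain ⟨c, d, hcd, hspan⟩ := key hab hqV he hni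
  have hle : Submodule.span ℂ ({lf a b ^ 3, q} : Set P2) ≤ W := by
    rw [Submodule.span_le]
    rintro x (rfl | rfl)
    exacts [hcube, hqW]
  have hWspan : Submodule.span ℂ ({lf a b ^ 3, q} : Set P2) = W :=
    Submodule.eq_of_le_of_finrank_le hle (by rw [hW2, finrank_span_cube_q hab hni])
  exact ⟨a, b, c, d, hab, hcd, by rw [← hWspan, hspan]⟩

/-- `g` is well defined on `ℂℙ¹ × ℂℙ¹`, every value of `g` is a Lagrangian
of `V` containing a perfect cube, `g` is injective, and the image of `g` is exactly the set
`K_ℂ` of Lagrangians of `V` containing a perfect cube. -/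
theorem statement3 :
    -- well defined: the value only depends on the projective classes
    (∀ a b c d a' b' c' d' : ℂ,
      (a ≠ 0 ∨ b ≠ 0) → (c ≠ 0 ∨ d ≠ 0) → (a' ≠ 0 ∨ b' ≠ 0) → (c' ≠ 0 ∨ d' ≠ 0) →
      a * b' = a' * b → c * d' = c' * d → gmap a b c d = gmap a' b' c' d') ∧
    -- every value is a Lagrangian containing a perfect cube
    (∀ a b c d : ℂ, (a ≠ 0 ∨ b ≠ 0) → (c ≠ 0 ∨ d ≠ 0) →
      IsLagrangian (gmap a b c d) ∧ ∃ p ∈ gmap a b c d, IsPerfectCube p) ∧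
    -- injectivity on ℂℙ¹ × ℂℙ¹
    (∀ a b c d a' b' c' d' : ℂ,
      (a ≠ 0 ∨ b ≠ 0) → (c ≠ 0 ∨ d ≠ 0) → (a' ≠ 0 ∨ b' ≠ 0) → (c' ≠ 0 ∨ d' ≠ 0) →
      gmap a b c d = gmap a' b' c' d' → a * b' = a' * b ∧ c * d' = c' * d) ∧
    -- the image is exactly K_ℂ
    (∀ W : Submodule ℂ P2,
      (IsLagrangian W ∧ ∃ p ∈ W, IsPerfectCube p) ↔
        ∃ a b c d : ℂ, (a ≠ 0 ∨ b ≠ 0) ∧ (c ≠ 0 ∨ d ≠ 0) ∧ W = gmap a b c d) := by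
  
  refine ⟨gmap_welldef, fun a b c d h1 h2 => ⟨gmap_lagrangian a b c d h1 h2, gmap_cube a b c d h1⟩,
    ?_, ?_⟩
  · intro a b c d a' b' c' d' h1 h2 h3 h4 heq
    have hab : a * b' = a' * b := by
      have hm : lf a' b' ^ 3 ∈ gmap a b c d := by
        rw [heq]; exact cube_mem_gmap a' b' c' d'
      have hz := eval_gmap_zero a b c d hm
      rw [map_pow, eval_lf] at hz
      have h5 : b' * a - a' * b = 0 := pow_eq_zero_iff (n := 3) (by norm_num) |>.mp hz
      linear_combination h5
    refine ⟨hab, ?_⟩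
    have heq2 : gmap a b c d = gmap a b c' d' :=
      heq.trans (gmap_welldef a' b' c' d' a b c' d' h3 h4 h1 h4
        (by linear_combination -hab) rfl)
    exact inj_same a b c d c' d' h1 h2 h4 heq2
  · intro W
    constructor
    · rintro ⟨hL, hex⟩
      exact lagrangian_cube_to_gmap hL hex
    · rintro ⟨a, b, c, d, h1, h2, rfl⟩
      exact ⟨gmap_lagrangian a b c d h1 h2, gmap_cube a b c d h1⟩
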